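/- arXiv:2212.06532 — 3 statements merged into one kernel-verified Lean document; each statement's English description precedes it below -/
import Mathlib

section
/- Let π : ℝⁿ → ℝᵐ be differentiable on an open convex set containing y and ŷ with y ≠ ŷ, let π*(ŷ) ∈ ℝᵐ be given (the ideal controller output), and set μ = π(y) − π*(ŷ) and ε = π(ŷ) − π*(ŷ). Suppose in addition that y − ŷ = Cζ + Dμ + D̃q for given matrices C, D, D̃ and vectors ζ, q. Then there exist points c₁, …, c_m in the open segment joining ŷ and y such that, with Λ the m×n matrix whose (i,j) entry is ∂πᵢ/∂yⱼ evaluated at cᵢ, one has μ = Λ(Cζ + Dμ + D̃q) + ε; consequently, if I − ΛD is invertible, μ = (I − ΛD)⁻¹ (ΛCζ + ΛD̃q + ε), and if D = 0 then μ = ΛCζ + ΛD̃q + ε. -/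
open Matrix

/-- Controller error lemma: with `μ = π(y) − π*(yh)`, `ε = π(yh) − π*(yh)` and the output
equation `y − yh = Cζ + Dμ + D̃q`, the DMV theorem yields points `c i` in the open segment
joining `yh` and `y` such that, with `Λ i j = ∂πᵢ/∂yⱼ (c i)`,
`μ = Λ(Cζ + Dμ + D̃q) + ε`; hence `μ = (I − ΛD)⁻¹(ΛCζ + ΛD̃q + ε)` when `I − ΛD` is
invertible, and `μ = ΛCζ + ΛD̃q + ε` when `D = 0`. -/
theorem controller_error_lemma {n m k p : ℕ}
    (πc : (Fin n → ℝ) → (Fin m → ℝ)) (U : Set (Fin n → ℝ))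
    (hU : IsOpen U) (hUconv : Convex ℝ U) (hπ : DifferentiableOn ℝ πc U)
    (y yh : Fin n → ℝ) (hy : y ∈ U) (hyh : yh ∈ U) (hne : y ≠ yh)
    (πstar : Fin m → ℝ)
    (C : Matrix (Fin n) (Fin k) ℝ) (D : Matrix (Fin n) (Fin m) ℝ)
    (Dt : Matrix (Fin n) (Fin p) ℝ)
    (ζ : Fin k → ℝ) (q : Fin p → ℝ) (μ ε : Fin m → ℝ)
    (hμ : μ = πc y - πstar) (hε : ε = πc yh - πstar)
    (hout : y - yh = C *ᵥ ζ + D *ᵥ μ + Dt *ᵥ q) :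
    ∃ c : Fin m → (Fin n → ℝ),
      (∀ i, c i ∈ openSegment ℝ yh y) ∧
      ∀ Λ : Matrix (Fin m) (Fin n) ℝ,
        Λ = Matrix.of (fun i j => fderiv ℝ (fun x => πc x i) (c i) (Pi.single j 1)) →
          μ = Λ *ᵥ (C *ᵥ ζ + D *ᵥ μ + Dt *ᵥ q) + ε ∧
          (IsUnit (1 - Λ * D) →
            μ = (1 - Λ * D)⁻¹ *ᵥ ((Λ * C) *ᵥ ζ + (Λ * Dt) *ᵥ q + ε)) ∧
          (D = 0 → μ = (Λ * C) *ᵥ ζ + (Λ * Dt) *ᵥ q + ε) := by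
  set v : Fin n → ℝ := y - yh with hv
  set g : ℝ → (Fin n → ℝ) := fun t => yh + t • v with hg
  have hgconv : ∀ t : ℝ, g t = (1 - t) • yh + t • y := by
    intro t; simp only [hg, hv]; module
  have hgU : ∀ t ∈ Set.Icc (0:ℝ) 1, g t ∈ U := by
    intro t ht
    rw [hgconv]
    exact hUconv hyh hy (by linarith [ht.2]) ht.1 (by ring)
  have hgcont : Continuous g := by
    exact continuous_const.add (continuous_id.smul continuous_const)
  have hgderiv : ∀ t : ℝ, HasDerivAt g v t := by
    intro t
    simpa [hg] using ((hasDerivAt_id t).smul_const v).const_add yh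
  -- MVT for each component
  have key : ∀ i : Fin m, ∃ t ∈ Set.Ioo (0:ℝ) 1,
      fderiv ℝ (fun x => πc x i) (g t) v = πc y i - πc yh i := by
    intro i
    have hfdiff : ∀ x ∈ U, DifferentiableAt ℝ (fun x => πc x i) x := by
      intro x hx
      exact ((ContinuousLinearMap.proj (R := ℝ) (φ := fun _ : Fin m => ℝ) i).differentiableAt).comp
        x (hπ.differentiableAt (hU.mem_nhds hx))
    have hcont : ContinuousOn (fun t => πc (g t) i) (Set.Icc (0:ℝ) 1) := by
      exact (continuous_apply i).comp_continuousOn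
        (hπ.continuousOn.comp hgcont.continuousOn hgU)
    have hderiv : ∀ t ∈ Set.Ioo (0:ℝ) 1,
        HasDerivAt (fun t => πc (g t) i) (fderiv ℝ (fun x => πc x i) (g t) v) t := by
      intro t ht
      have hmem : g t ∈ U := hgU t ⟨le_of_lt ht.1, le_of_lt ht.2⟩
      exact ((hfdiff (g t) hmem).hasFDerivAt).comp_hasDerivAt t (hgderiv t)
    obtain ⟨t, ht, heq⟩ := exists_hasDerivAt_eq_slope (fun t => πc (g t) i)
      (fun t => fderiv ℝ (fun x => πc x i) (g t) v) (by norm_num) hcont hderiv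
    refine ⟨t, ht, ?_⟩
    have h1 : g 1 = y := by rw [hgconv]; simp
    have h0 : g 0 = yh := by rw [hgconv]; simp
    rw [heq, h1, h0]; ring
  choose t ht hmvt using key
  refine ⟨fun i => g (t i), ?_, ?_⟩
  · intro i
    rw [openSegment_eq_image']
    exact ⟨t i, ht i, rfl⟩
  intro Λ hΛ
  -- Λ *ᵥ v = πc y - πc yh componentwise
  have hΛv : Λ *ᵥ v = πc y - πc yh := by
    funext i
    have hlin : fderiv ℝ (fun x => πc x i) (g (t i)) v
        = ∑ j, v j * fderiv ℝ (fun x => πc x i) (g (t i)) (Pi.single j 1) := by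
      have hvsum : v = ∑ j, v j • (Pi.single j 1 : Fin n → ℝ) := by
        funext j'
        simp [Pi.single_apply, Finset.sum_apply, mul_comm]
      conv_lhs => rw [hvsum]
      rw [map_sum]
      congr 1; funext j
      rw [(fderiv ℝ (fun x => πc x i) (g (t i))).map_smul]
      simp [smul_eq_mul]
    have : (Λ *ᵥ v) i = ∑ j, v j * Λ i j := by
      simp [Matrix.mulVec, dotProduct, mul_comm]
    rw [Pi.sub_apply, ← hmvt i, hlin, this, hΛ]
    simp
  have heq1 : μ = Λ *ᵥ (C *ᵥ ζ + D *ᵥ μ + Dt *ᵥ q) + ε := by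
    rw [← hout, hΛv, hμ, hε]
    abel
  refine ⟨heq1, ?_, ?_⟩
  · intro hunit
    have hdet : IsUnit (1 - Λ * D).det := (Matrix.isUnit_iff_isUnit_det _).mp hunit
    have heq2 : μ = (Λ * C) *ᵥ ζ + (Λ * D) *ᵥ μ + (Λ * Dt) *ᵥ q + ε := by
      conv_lhs => rw [heq1]
      simp only [Matrix.mulVec_add, Matrix.mulVec_mulVec]
    have hfact : (1 - Λ * D) *ᵥ μ = (Λ * C) *ᵥ ζ + (Λ * Dt) *ᵥ q + ε := by
      have h3 : μ - (Λ * D) *ᵥ μ = (Λ * C) *ᵥ ζ + (Λ * Dt) *ᵥ q + ε := by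
        obtain ⟨u, hu⟩ : ∃ u, (Λ * D) *ᵥ μ = u := ⟨_, rfl⟩
        rw [hu] at heq2 ⊢
        rw [heq2]
        abel
      rw [Matrix.sub_mulVec, Matrix.one_mulVec]
      exact h3
    calc μ = ((1 - Λ * D)⁻¹ * (1 - Λ * D)) *ᵥ μ := by
            rw [Matrix.nonsing_inv_mul _ hdet, Matrix.one_mulVec]
      _ = (1 - Λ * D)⁻¹ *ᵥ ((1 - Λ * D) *ᵥ μ) := by rw [Matrix.mulVec_mulVec]
      _ = _ := by rw [hfact]
  · intro hD0
    rw [heq1, hD0]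
    simp [Matrix.mulVec_add, Matrix.mulVec_mulVec, add_assoc]
end

section
/- Let K ⊆ ℝᵏ be a nonempty compact set, let M : ℝᵏ → (n×n real matrices) be continuous with M(s) symmetric and negative definite for every s ∈ K, and let F be a fixed symmetric positive semidefinite n×n real matrix. Then there exists ε > 0 such that for every s ∈ K the matrix M(s) + ε·F is negative semidefinite. -/
open Matrix

/-- Perturbation of a strict parameter-dependent LMI on a compact set: if `M s` is symmetric
and negative definite for every `s` in a nonempty compact set `K`, `M` is continuous, and `F`
is symmetric positive semidefinite, then there is `ε > 0` such that `M s + ε • F` is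
negative semidefinite for all `s ∈ K`. -/
theorem lmi_perturbation {k n : ℕ} (K : Set (Fin k → ℝ))
    (hK : IsCompact K) (hKne : K.Nonempty)
    (M : (Fin k → ℝ) → Matrix (Fin n) (Fin n) ℝ) (hMcont : Continuous M)
    (hMsymm : ∀ s ∈ K, (M s).IsSymm) (hMneg : ∀ s ∈ K, (-(M s)).PosDef)
    (F : Matrix (Fin n) (Fin n) ℝ) (hFsymm : F.IsSymm) (hF : F.PosSemidef) :
    ∃ ε > (0 : ℝ), ∀ s ∈ K, (-(M s + ε • F)).PosSemidef := by
  rcases Nat.eq_zero_or_pos n with hn | hn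
  · subst hn
    refine ⟨1, one_pos, fun s hs => .of_dotProduct_mulVec_nonneg ?_ fun x => ?_⟩
    · ext i j; exact i.elim0
    · simp [dotProduct]
  · haveI : Nonempty (Fin n) := ⟨⟨0, hn⟩⟩
    set sph := Metric.sphere (0 : Fin n → ℝ) 1 with hsphdef
    have hsphcomp : IsCompact sph := isCompact_sphere 0 1
    have hsphne : sph.Nonempty := NormedSpace.sphere_nonempty.2 zero_le_one
    -- max of quadratic form of M over K × sphere
    have hfcont : Continuous fun p : (Fin k → ℝ) × (Fin n → ℝ) =>
        p.2 ⬝ᵥ (M p.1).mulVec p.2 :=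
      continuous_snd.dotProduct ((hMcont.comp continuous_fst).matrix_mulVec continuous_snd)
    obtain ⟨p₀, hp₀, hmax⟩ := (hK.prod hsphcomp).exists_isMaxOn (hKne.prod hsphne)
      hfcont.continuousOn
    -- max of quadratic form of F over sphere
    have hgcont : Continuous fun x : Fin n → ℝ => x ⬝ᵥ F.mulVec x :=
      continuous_id.dotProduct (continuous_const.matrix_mulVec continuous_id)
    obtain ⟨x₀, hx₀, hFmax⟩ := hsphcomp.exists_isMaxOn hsphne hgcont.continuousOn
    set c : ℝ := -(p₀.2 ⬝ᵥ (M p₀.1).mulVec p₀.2) with hc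
    set C : ℝ := x₀ ⬝ᵥ F.mulVec x₀ with hC
    have hp₀2ne : p₀.2 ≠ 0 := by
      intro h0
      have := hp₀.2
      rw [h0] at this
      simp [hsphdef] at this
    have hcpos : 0 < c := by
      have := (hMneg p₀.1 hp₀.1).dotProduct_mulVec_pos hp₀2ne
      simp only [neg_mulVec, dotProduct_neg, star_trivial] at this
      linarith [this]
    have hCnn : 0 ≤ C := by
      have := hF.dotProduct_mulVec_nonneg x₀
      simpa using this
    refine ⟨c / (C + 1), div_pos hcpos (by linarith), fun s hs => .of_dotProduct_mulVec_nonneg ?_ fun x => ?_⟩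
    · have hMh : (M s).IsHermitian := by
        have := (hMneg s hs).1.neg
        simpa using this
      have hFh : ((c / (C + 1)) • F).IsHermitian := by
        unfold Matrix.IsHermitian
        rw [conjTranspose_smul, hF.1]
        simp
      exact (hMh.add hFh).neg
    · rcases eq_or_ne x 0 with hx | hx
      · simp [hx]
      · have hxn : ‖x‖ ≠ 0 := norm_ne_zero_iff.2 hx
        set y : Fin n → ℝ := ‖x‖⁻¹ • x with hy
        have hymem : y ∈ sph := by
          simp [hsphdef, hy, norm_smul, abs_of_nonneg (norm_nonneg x),
            inv_mul_cancel₀ hxn]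
        have hMy := hmax (Set.mk_mem_prod hs hymem)
        have hFy := hFmax hymem
        have hFy0 : 0 ≤ y ⬝ᵥ F.mulVec y := by simpa using hF.dotProduct_mulVec_nonneg y
        have hxy : x = ‖x‖ • y := by
          rw [hy, smul_smul, mul_inv_cancel₀ hxn, one_smul]
        have hscale : ∀ A : Matrix (Fin n) (Fin n) ℝ,
            x ⬝ᵥ A.mulVec x = ‖x‖ * ‖x‖ * (y ⬝ᵥ A.mulVec y) := by
          intro A
          rw [hy, smul_dotProduct, mulVec_smul, dotProduct_smul, smul_eq_mul, smul_eq_mul]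
          field_simp
        have hMy' : y ⬝ᵥ (M s).mulVec y ≤ p₀.2 ⬝ᵥ (M p₀.1).mulVec p₀.2 := hMy
        have hFy' : y ⬝ᵥ F.mulVec y ≤ C := hFy
        have e1 : y ⬝ᵥ (M s).mulVec y ≤ -c := by
          rw [hc, neg_neg]; exact hMy'
        have hεC : c / (C + 1) * C ≤ c := by
          rw [div_mul_eq_mul_div, div_le_iff₀ (by linarith : (0:ℝ) < C + 1)]
          nlinarith
        have hεpos : 0 < c / (C + 1) := div_pos hcpos (by linarith)
        have hnn : (0:ℝ) ≤ ‖x‖ * ‖x‖ := mul_nonneg (norm_nonneg x) (norm_nonneg x)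
        simp only [star_trivial, neg_mulVec, dotProduct_neg, add_mulVec, dotProduct_add,
          smul_mulVec, dotProduct_smul, smul_eq_mul]
        rw [hscale (M s), hscale F]
        nlinarith [mul_le_mul_of_nonneg_left e1 hnn,
          mul_le_mul_of_nonneg_left hFy' (mul_nonneg hnn hεpos.le),
          mul_le_mul_of_nonneg_left hεC hnn]
end

section
/- Let S ⊆ ℝᵏ and Ṡ ⊆ ℝᵏ, let 𝒜, ℬ₁, ℬ₂, 𝒞₁, 𝒟₁₁, 𝒟₁₂, 𝒞₂, 𝒟₂₁, 𝒟₂₂ be continuous matrix-valued functions of s ∈ ℝᵏ (of conformable dimensions), let P : ℝᵏ → (symmetric n×n real matrices) be differentiable with P(s) positive semidefinite for all s ∈ S, let M be a fixed symmetric matrix, and let λ ≥ 0 and γ > 0. Assume that for all (s, ρ) ∈ S × Ṡ the symmetric block matrix [[P(s)𝒜(s) + 𝒜(s)ᵀP(s) + ∂P(s,ρ), P(s)ℬ₁(s), P(s)ℬ₂(s)], [ℬ₁(s)ᵀP(s), 0, 0], [ℬ₂(s)ᵀP(s), 0, −I]] + (1/γ²)[𝒞₂(s) 𝒟₂₁(s)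 𝒟₂₂(s)]ᵀ[𝒞₂(s) 𝒟₂₁(s) 𝒟₂₂(s)] + λ[𝒞₁(s) 𝒟₁₁(s) 𝒟₁₂(s)]ᵀM[𝒞₁(s) 𝒟₁₁(s) 𝒟₁₂(s)] is negative semidefinite, where ∂P(s,ρ) = Σⱼ (∂P/∂sⱼ)(s)·ρⱼ. Let s : [0,∞) → ℝᵏ be differentiable with s(t) ∈ S and s′(t) ∈ Ṡ for all t, let q, η be continuous vector-valued functions on [0,∞), and let χ be continuously differentiable with χ(0) = 0 and χ′(t) = 𝒜(s(t))χ(t) + ℬ₁(s(t))q(t) + ℬ₂(s(t))η(t) for all t ≥ 0. Define r(t) = 𝒞₁(s(t))χ(t) + 𝒟₁₁(s(t))q(t) + 𝒟₁₂(s(t))η(t) and z(t) = 𝒞₂(s(t))χ(t) + 𝒟₂₁(s(t))q(t) + 𝒟₂₂(s(t))η(t), and assume the hard IQC condition ∫₀ᵀ r(τ)ᵀ M r(τ) dτ ≥ 0 for every T ≥ 0. Then for every T ≥ 0, ∫₀ᵀ ‖z(τ)‖² dτ ≤ γ² ∫₀ᵀ ‖η(τ)‖² dτ. -/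
open Matrix

lemma dot_transpose_mulVec {m p : Type*} [Fintype m] [Fintype p]
    (A : Matrix m p ℝ) (x : p → ℝ) (y : m → ℝ) :
    x ⬝ᵥ (Aᵀ *ᵥ y) = (A *ᵥ x) ⬝ᵥ y := by
  rw [Matrix.dotProduct_mulVec, Matrix.vecMul_transpose]

lemma contAt_dotProduct {X : Type*} [TopologicalSpace X] {m : ℕ} {f g : X → Fin m → ℝ} {x : X}
    (hf : ContinuousAt f x) (hg : ContinuousAt g x) :
    ContinuousAt (fun y => f y ⬝ᵥ g y) x := by
  have h : ∀ i : Fin m, ContinuousAt (fun y => f y i * g y i) x := fun i =>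
    (((continuous_apply i).continuousAt).comp hf).mul
      (((continuous_apply i).continuousAt).comp hg)
  simpa [ContinuousAt, dotProduct] using tendsto_finset_sum Finset.univ (fun i _ => h i)

lemma contAt_mulVec {X : Type*} [TopologicalSpace X] {m p : ℕ}
    {f : X → Matrix (Fin m) (Fin p) ℝ} {g : X → Fin p → ℝ} {x : X}
    (hf : ContinuousAt f x) (hg : ContinuousAt g x) :
    ContinuousAt (fun y => f y *ᵥ g y) x := by
  rw [continuousAt_pi]
  intro i
  have hfi : ContinuousAt (fun y => f y i) x := ((continuous_apply i).continuousAt).comp hf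
  simpa [Matrix.mulVec, ContinuousAt] using contAt_dotProduct hfi hg

lemma hasDerivAt_quadform {n : ℕ} {x : ℝ → Fin n → ℝ} {x' : Fin n → ℝ}
    {Q : ℝ → Matrix (Fin n) (Fin n) ℝ} {Q' : Matrix (Fin n) (Fin n) ℝ} {t : ℝ}
    (hx : HasDerivAt x x' t) (hQ : ∀ i j, HasDerivAt (fun τ => Q τ i j) (Q' i j) t) :
    HasDerivAt (fun τ => x τ ⬝ᵥ (Q τ *ᵥ x τ))
      (x' ⬝ᵥ (Q t *ᵥ x t) + x t ⬝ᵥ (Q' *ᵥ x t) + x t ⬝ᵥ (Q t *ᵥ x')) t := by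
  have hxi : ∀ i, HasDerivAt (fun τ => x τ i) (x' i) t := fun i => hasDerivAt_pi.1 hx i
  have key : HasDerivAt (fun τ => ∑ i, ∑ j, x τ i * (Q τ i j * x τ j))
      (∑ i, ∑ j, (x' i * (Q t i j * x t j) +
        x t i * (Q' i j * x t j + Q t i j * x' j))) t := by
    apply HasDerivAt.fun_sum; intro i _; apply HasDerivAt.fun_sum; intro j _
    exact (hxi i).mul ((hQ i j).mul (hxi j))
  have hfun : (fun τ => x τ ⬝ᵥ (Q τ *ᵥ x τ))
      = fun τ => ∑ i, ∑ j, x τ i * (Q τ i j * x τ j) := by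
    funext τ; simp [dotProduct, Matrix.mulVec, Finset.mul_sum]
  have hder : x' ⬝ᵥ (Q t *ᵥ x t) + x t ⬝ᵥ (Q' *ᵥ x t) + x t ⬝ᵥ (Q t *ᵥ x')
      = ∑ i, ∑ j, (x' i * (Q t i j * x t j) +
        x t i * (Q' i j * x t j + Q t i j * x' j)) := by
    simp only [dotProduct, Matrix.mulVec, Finset.mul_sum, mul_add,
      Finset.sum_add_distrib]
    ring
  rw [hfun, hder]; exact key

lemma quad_expand {n nq nη nr nz : ℕ}
    (A : Matrix (Fin n) (Fin n) ℝ) (B₁ : Matrix (Fin n) (Fin nq) ℝ) (B₂ : Matrix (Fin n) (Fin nη) ℝ)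
    (C₁ : Matrix (Fin nr) (Fin n) ℝ) (D₁₁ : Matrix (Fin nr) (Fin nq) ℝ) (D₁₂ : Matrix (Fin nr) (Fin nη) ℝ)
    (C₂ : Matrix (Fin nz) (Fin n) ℝ) (D₂₁ : Matrix (Fin nz) (Fin nq) ℝ) (D₂₂ : Matrix (Fin nz) (Fin nη) ℝ)
    (P dP : Matrix (Fin n) (Fin n) ℝ) (M : Matrix (Fin nr) (Fin nr) ℝ)
    (c lam : ℝ) (x : Fin n → ℝ) (u : Fin nq → ℝ) (v : Fin nη → ℝ) :
    Sum.elim x (Sum.elim u v) ⬝ᵥ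
      ((Matrix.fromBlocks (P * A + Aᵀ * P + dP)
          (Matrix.fromCols (P * B₁) (P * B₂))
          (Matrix.fromRows (B₁ᵀ * P) (B₂ᵀ * P))
          (Matrix.fromBlocks 0 0 0 (-(1 : Matrix (Fin nη) (Fin nη) ℝ)))
        + c • ((Matrix.fromCols C₂ (Matrix.fromCols D₂₁ D₂₂))ᵀ *
              (Matrix.fromCols C₂ (Matrix.fromCols D₂₁ D₂₂)))
        + lam • ((Matrix.fromCols C₁ (Matrix.fromCols D₁₁ D₁₂))ᵀ * M *
              (Matrix.fromCols C₁ (Matrix.fromCols D₁₁ D₁₂)))) *ᵥ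
        Sum.elim x (Sum.elim u v))
    = (A *ᵥ x + B₁ *ᵥ u + B₂ *ᵥ v) ⬝ᵥ (P *ᵥ x) + x ⬝ᵥ (dP *ᵥ x)
      + x ⬝ᵥ (P *ᵥ (A *ᵥ x + B₁ *ᵥ u + B₂ *ᵥ v))
      + c * ((C₂ *ᵥ x + D₂₁ *ᵥ u + D₂₂ *ᵥ v) ⬝ᵥ (C₂ *ᵥ x + D₂₁ *ᵥ u + D₂₂ *ᵥ v))
      + lam * ((C₁ *ᵥ x + D₁₁ *ᵥ u + D₁₂ *ᵥ v) ⬝ᵥ (M *ᵥ (C₁ *ᵥ x + D₁₁ *ᵥ u + D₁₂ *ᵥ v)))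
      - v ⬝ᵥ v := by
  simp only [Matrix.add_mulVec, Matrix.smul_mulVec, dotProduct_add, dotProduct_smul,
    smul_eq_mul, ← Matrix.mulVec_mulVec, Matrix.fromBlocks_mulVec,
    Matrix.fromCols_mulVec_sumElim, Matrix.fromRows_mulVec,
    sumElim_dotProduct_sumElim, Matrix.zero_mulVec, Matrix.neg_mulVec,
    Matrix.one_mulVec, dot_transpose_mulVec, Matrix.mulVec_add, add_dotProduct,
    dotProduct_neg, dotProduct_zero, neg_dotProduct, add_zero, zero_add,
    Sum.elim_comp_inl, Sum.elim_comp_inr]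
  ring


/-- Worst-case RISE theorem (integrated form): if the parameter-dependent dissipation LMI
holds on `S × Ṡ` with positive semidefinite storage matrix `P(s)`, and the IQC filter output
`r` satisfies the hard IQC `∫₀ᵀ rᵀMr ≥ 0`, then the extended LPV error system with zero
initial state satisfies `∫₀ᵀ ‖z‖² ≤ γ² ∫₀ᵀ ‖η‖²` for every `T ≥ 0`. -/
theorem worst_case_RISE {k n nq nη nr nz : ℕ}
    (S Sdot : Set (Fin k → ℝ))
    (A : (Fin k → ℝ) → Matrix (Fin n) (Fin n) ℝ)
    (B₁ : (Fin k → ℝ) → Matrix (Fin n) (Fin nq) ℝ)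
    (B₂ : (Fin k → ℝ) → Matrix (Fin n) (Fin nη) ℝ)
    (C₁ : (Fin k → ℝ) → Matrix (Fin nr) (Fin n) ℝ)
    (D₁₁ : (Fin k → ℝ) → Matrix (Fin nr) (Fin nq) ℝ)
    (D₁₂ : (Fin k → ℝ) → Matrix (Fin nr) (Fin nη) ℝ)
    (C₂ : (Fin k → ℝ) → Matrix (Fin nz) (Fin n) ℝ)
    (D₂₁ : (Fin k → ℝ) → Matrix (Fin nz) (Fin nq) ℝ)
    (D₂₂ : (Fin k → ℝ) → Matrix (Fin nz) (Fin nη) ℝ)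
    (hAc : Continuous A) (hB₁c : Continuous B₁) (hB₂c : Continuous B₂)
    (hC₁c : Continuous C₁) (hD₁₁c : Continuous D₁₁) (hD₁₂c : Continuous D₁₂)
    (hC₂c : Continuous C₂) (hD₂₁c : Continuous D₂₁) (hD₂₂c : Continuous D₂₂)
    (P : (Fin k → ℝ) → Matrix (Fin n) (Fin n) ℝ)
    (hPdiff : ∀ i j, Differentiable ℝ (fun u => P u i j))
    (hPsymm : ∀ u, (P u).IsSymm)
    (hPpos : ∀ s ∈ S, (P s).PosSemidef)
    (dP : (Fin k → ℝ) → (Fin k → ℝ) → Matrix (Fin n) (Fin n) ℝ)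
    (hdP : ∀ s ρ i j,
      dP s ρ i j = ∑ l, fderiv ℝ (fun u => P u i j) s (Pi.single l 1) * ρ l)
    (M : Matrix (Fin nr) (Fin nr) ℝ) (hM : M.IsSymm)
    (lam γ : ℝ) (hlam : 0 ≤ lam) (hγ : 0 < γ)
    (hLMI : ∀ s ∈ S, ∀ ρ ∈ Sdot,
      (-(Matrix.fromBlocks
          (P s * A s + (A s)ᵀ * P s + dP s ρ)
          (Matrix.fromCols (P s * B₁ s) (P s * B₂ s))
          (Matrix.fromRows ((B₁ s)ᵀ * P s) ((B₂ s)ᵀ * P s))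
          (Matrix.fromBlocks 0 0 0 (-(1 : Matrix (Fin nη) (Fin nη) ℝ)))
        + (1 / γ ^ 2) •
            ((Matrix.fromCols (C₂ s) (Matrix.fromCols (D₂₁ s) (D₂₂ s)))ᵀ *
              (Matrix.fromCols (C₂ s) (Matrix.fromCols (D₂₁ s) (D₂₂ s))))
        + lam •
            ((Matrix.fromCols (C₁ s) (Matrix.fromCols (D₁₁ s) (D₁₂ s)))ᵀ * M *
              (Matrix.fromCols (C₁ s) (Matrix.fromCols (D₁₁ s) (D₁₂ s)))))).PosSemidef)
    (s : ℝ → Fin k → ℝ) (s' : ℝ → Fin k → ℝ)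
    (hs : ∀ t, 0 ≤ t → HasDerivAt s (s' t) t)
    (hsS : ∀ t, 0 ≤ t → s t ∈ S) (hs'S : ∀ t, 0 ≤ t → s' t ∈ Sdot)
    (q : ℝ → Fin nq → ℝ) (η : ℝ → Fin nη → ℝ) (hq : Continuous q) (hη : Continuous η)
    (χ : ℝ → Fin n → ℝ) (hχ0 : χ 0 = 0)
    (hχ : ∀ t, 0 ≤ t →
      HasDerivAt χ (A (s t) *ᵥ χ t + B₁ (s t) *ᵥ q t + B₂ (s t) *ᵥ η t) t)
    (hχc : Continuous χ)
    (r : ℝ → Fin nr → ℝ)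
    (hr : ∀ t, r t = C₁ (s t) *ᵥ χ t + D₁₁ (s t) *ᵥ q t + D₁₂ (s t) *ᵥ η t)
    (z : ℝ → Fin nz → ℝ)
    (hz : ∀ t, z t = C₂ (s t) *ᵥ χ t + D₂₁ (s t) *ᵥ q t + D₂₂ (s t) *ᵥ η t)
    (hIQC : ∀ T, 0 ≤ T → 0 ≤ ∫ τ in (0:ℝ)..T, r τ ⬝ᵥ (M *ᵥ r τ)) :
    ∀ T, 0 ≤ T →
      (∫ τ in (0:ℝ)..T, z τ ⬝ᵥ z τ) ≤ γ ^ 2 * ∫ τ in (0:ℝ)..T, η τ ⬝ᵥ η τ := by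
  intro T hT
  have hγ2 : (0:ℝ) < γ ^ 2 := by positivity
  -- derivative of entries of P ∘ s
  have hPent : ∀ t : ℝ, 0 ≤ t → ∀ i j,
      HasDerivAt (fun τ => P (s τ) i j) (dP (s t) (s' t) i j) t := by
    intro t ht i j
    have h1 : HasFDerivAt (fun u => P u i j) (fderiv ℝ (fun u => P u i j) (s t)) (s t) :=
      ((hPdiff i j) (s t)).hasFDerivAt
    have h2 : HasDerivAt (fun τ => P (s τ) i j)
        (fderiv ℝ (fun u => P u i j) (s t) (s' t)) t := by
      exact h1.comp_hasDerivAt t (hs t ht)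
    have h3 : dP (s t) (s' t) i j = fderiv ℝ (fun u => P u i j) (s t) (s' t) := by
      rw [hdP]
      conv_rhs => rw [← Finset.univ_sum_single (s' t)]
      rw [map_sum]
      refine Finset.sum_congr rfl fun l _ => ?_
      have hsingle : Pi.single l (s' t l) = (s' t l) • (Pi.single l 1 : Fin k → ℝ) := by
        ext m; simp [Pi.single_apply, mul_ite]
      rw [hsingle, (fderiv ℝ (fun u => P u i j) (s t)).map_smul, smul_eq_mul, mul_comm]
    rw [h3]; exact h2
  -- derivative of the storage function
  have hVd : ∀ t : ℝ, 0 ≤ t → HasDerivAt (fun τ => χ τ ⬝ᵥ (P (s τ) *ᵥ χ τ))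
      ((A (s t) *ᵥ χ t + B₁ (s t) *ᵥ q t + B₂ (s t) *ᵥ η t) ⬝ᵥ (P (s t) *ᵥ χ t)
        + χ t ⬝ᵥ (dP (s t) (s' t) *ᵥ χ t)
        + χ t ⬝ᵥ (P (s t) *ᵥ (A (s t) *ᵥ χ t + B₁ (s t) *ᵥ q t + B₂ (s t) *ᵥ η t))) t :=
    fun t ht => hasDerivAt_quadform (hχ t ht) (fun i j => hPent t ht i j)
  -- continuity facts
  have hst : ∀ t : ℝ, 0 ≤ t → ContinuousAt s t := fun t ht => (hs t ht).continuousAt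
  have hzc : ∀ t : ℝ, 0 ≤ t → ContinuousAt z t := by
    intro t ht
    have hzeq : z = fun τ => C₂ (s τ) *ᵥ χ τ + D₂₁ (s τ) *ᵥ q τ + D₂₂ (s τ) *ᵥ η τ :=
      funext hz
    rw [hzeq]
    exact ((contAt_mulVec (hC₂c.continuousAt.comp (hst t ht)) hχc.continuousAt).add
      (contAt_mulVec (hD₂₁c.continuousAt.comp (hst t ht)) hq.continuousAt)).add
      (contAt_mulVec (hD₂₂c.continuousAt.comp (hst t ht)) hη.continuousAt)
  have hrc : ∀ t : ℝ, 0 ≤ t → ContinuousAt r t := by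
    intro t ht
    have hreq : r = fun τ => C₁ (s τ) *ᵥ χ τ + D₁₁ (s τ) *ᵥ q τ + D₁₂ (s τ) *ᵥ η τ :=
      funext hr
    rw [hreq]
    exact ((contAt_mulVec (hC₁c.continuousAt.comp (hst t ht)) hχc.continuousAt).add
      (contAt_mulVec (hD₁₁c.continuousAt.comp (hst t ht)) hq.continuousAt)).add
      (contAt_mulVec (hD₁₂c.continuousAt.comp (hst t ht)) hη.continuousAt)
  set Φ : ℝ → ℝ := fun τ =>
    (1 / γ ^ 2) * (z τ ⬝ᵥ z τ) + lam * (r τ ⬝ᵥ (M *ᵥ r τ)) - η τ ⬝ᵥ η τ with hΦdef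
  have hΦc : ∀ t : ℝ, 0 ≤ t → ContinuousAt Φ t := by
    intro t ht
    exact (((contAt_dotProduct (hzc t ht) (hzc t ht)).const_mul _).add
      ((contAt_dotProduct (hrc t ht) (contAt_mulVec continuousAt_const (hrc t ht))).const_mul _)).sub
      (contAt_dotProduct hη.continuousAt hη.continuousAt)
  have hΦOn : ContinuousOn Φ (Set.Ici 0) := fun t ht => (hΦc t ht).continuousWithinAt
  have hsub : ∀ b : ℝ, 0 ≤ b → Set.uIcc (0:ℝ) b ⊆ Set.Ici 0 := by
    intro b hb
    rw [Set.uIcc_of_le hb]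
    exact fun x hx => hx.1
  have hΦi : ∀ b : ℝ, 0 ≤ b → IntervalIntegrable Φ MeasureTheory.volume 0 b :=
    fun b hb => (hΦOn.mono (hsub b hb)).intervalIntegrable
  set g : ℝ → ℝ := fun t => (χ t ⬝ᵥ (P (s t) *ᵥ χ t)) + ∫ τ in (0:ℝ)..t, Φ τ with hgdef
  -- derivative of g on the interior
  have hgd : ∀ t : ℝ, 0 < t → HasDerivAt g
      (((A (s t) *ᵥ χ t + B₁ (s t) *ᵥ q t + B₂ (s t) *ᵥ η t) ⬝ᵥ (P (s t) *ᵥ χ t)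
        + χ t ⬝ᵥ (dP (s t) (s' t) *ᵥ χ t)
        + χ t ⬝ᵥ (P (s t) *ᵥ (A (s t) *ᵥ χ t + B₁ (s t) *ᵥ q t + B₂ (s t) *ᵥ η t)))
        + Φ t) t := by
    intro t ht
    have hmeas : StronglyMeasurableAtFilter Φ (nhds t) MeasureTheory.volume :=
      ⟨Set.Ioi 0, Ioi_mem_nhds ht,
        ((hΦOn.mono Set.Ioi_subset_Ici_self).aestronglyMeasurable measurableSet_Ioi)⟩
    have h2 := intervalIntegral.integral_hasDerivAt_right (hΦi t ht.le) hmeas (hΦc t ht.le)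
    exact (hVd t ht.le).add h2
  -- the pointwise dissipation inequality
  have hkey : ∀ t : ℝ, 0 ≤ t →
      (((A (s t) *ᵥ χ t + B₁ (s t) *ᵥ q t + B₂ (s t) *ᵥ η t) ⬝ᵥ (P (s t) *ᵥ χ t)
        + χ t ⬝ᵥ (dP (s t) (s' t) *ᵥ χ t)
        + χ t ⬝ᵥ (P (s t) *ᵥ (A (s t) *ᵥ χ t + B₁ (s t) *ᵥ q t + B₂ (s t) *ᵥ η t)))
        + Φ t) ≤ 0 := by
    intro t ht
    have hpsd := (hLMI (s t) (hsS t ht) (s' t) (hs'S t ht)).dotProduct_mulVec_nonneg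
      (Sum.elim (χ t) (Sum.elim (q t) (η t)))
    have hstar : star (Sum.elim (χ t) (Sum.elim (q t) (η t)))
        = Sum.elim (χ t) (Sum.elim (q t) (η t)) := by
      ext i; simp
    rw [hstar, Matrix.neg_mulVec, dotProduct_neg] at hpsd
    rw [quad_expand (A (s t)) (B₁ (s t)) (B₂ (s t)) (C₁ (s t)) (D₁₁ (s t)) (D₁₂ (s t))
      (C₂ (s t)) (D₂₁ (s t)) (D₂₂ (s t)) (P (s t)) (dP (s t) (s' t)) M
      (1 / γ ^ 2) lam (χ t) (q t) (η t)] at hpsd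
    rw [hΦdef]
    simp only [hz t, hr t]
    linarith [hpsd]
  -- g is antitone on [0, T]
  have hganti : AntitoneOn g (Set.Icc 0 T) := by
    apply antitoneOn_of_deriv_nonpos (convex_Icc 0 T)
    · rw [hgdef]
      apply ContinuousOn.add
      · exact fun t ht => ((hVd t ht.1).continuousAt).continuousWithinAt
      · have hint : MeasureTheory.IntegrableOn Φ (Set.uIcc 0 T) MeasureTheory.volume :=
          (hΦOn.mono (hsub T hT)).integrableOn_compact isCompact_uIcc
        have := intervalIntegral.continuousOn_primitive_interval hint
        rwa [Set.uIcc_of_le hT] at this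
    · intro t ht
      rw [interior_Icc] at ht
      exact ((hgd t ht.1).differentiableAt).differentiableWithinAt
    · intro t ht
      rw [interior_Icc] at ht
      rw [(hgd t ht.1).deriv]
      exact hkey t ht.1.le
  have hg0 : g 0 = 0 := by
    rw [hgdef]
    simp [hχ0]
  have hgT : g T ≤ 0 := by
    have := hganti (Set.left_mem_Icc.mpr hT) (Set.right_mem_Icc.mpr hT) hT
    linarith [this, hg0.le, hg0.ge]
  -- split the integral
  have hZint : IntervalIntegrable (fun τ => z τ ⬝ᵥ z τ) MeasureTheory.volume 0 T :=
    (ContinuousOn.intervalIntegrable (fun t ht =>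
      (contAt_dotProduct (hzc t (hsub T hT ht)) (hzc t (hsub T hT ht))).continuousWithinAt))
  have hRint : IntervalIntegrable (fun τ => r τ ⬝ᵥ (M *ᵥ r τ)) MeasureTheory.volume 0 T :=
    (ContinuousOn.intervalIntegrable (fun t ht =>
      (contAt_dotProduct (hrc t (hsub T hT ht))
        (contAt_mulVec continuousAt_const (hrc t (hsub T hT ht)))).continuousWithinAt))
  have hEint : IntervalIntegrable (fun τ => η τ ⬝ᵥ η τ) MeasureTheory.volume 0 T :=
    (Continuous.intervalIntegrable (hη.dotProduct hη) 0 T)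
  have hsplit : (∫ τ in (0:ℝ)..T, Φ τ)
      = (1 / γ ^ 2) * (∫ τ in (0:ℝ)..T, z τ ⬝ᵥ z τ)
        + lam * (∫ τ in (0:ℝ)..T, r τ ⬝ᵥ (M *ᵥ r τ))
        - ∫ τ in (0:ℝ)..T, η τ ⬝ᵥ η τ := by
    rw [hΦdef]
    rw [intervalIntegral.integral_sub ((hZint.const_mul _).add (hRint.const_mul _)) hEint,
      intervalIntegral.integral_add (hZint.const_mul _) (hRint.const_mul _),
      intervalIntegral.integral_const_mul, intervalIntegral.integral_const_mul]
  have hVT : 0 ≤ χ T ⬝ᵥ (P (s T) *ᵥ χ T) := by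
    have := (hPpos (s T) (hsS T hT)).dotProduct_mulVec_nonneg (χ T)
    simpa using this
  have hIQCT := hIQC T hT
  rw [hgdef] at hgT
  simp only at hgT
  rw [hsplit] at hgT
  have hmain : (1 / γ ^ 2) * (∫ τ in (0:ℝ)..T, z τ ⬝ᵥ z τ)
      ≤ ∫ τ in (0:ℝ)..T, η τ ⬝ᵥ η τ := by
    nlinarith [mul_nonneg hlam hIQCT]
  have hId : γ ^ 2 * ((1 / γ ^ 2) * (∫ τ in (0:ℝ)..T, z τ ⬝ᵥ z τ))
      = ∫ τ in (0:ℝ)..T, z τ ⬝ᵥ z τ := by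
    rw [← mul_assoc]
    field_simp
  linarith [mul_le_mul_of_nonneg_left hmain hγ2.le, hId.ge, hId.le]
end
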